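/- Let α ∈ (0, 1/2), and suppose the φ-mixing coefficients of the stationary Markov chain satisfy φ_m ≤ D r^m for all m ≥ 1, for some constants D > 0 and 0 < r < 1. Then for every t ≥ 1, 2·Σ_{1 ≤ i < j ≤ t} (1/i)(1/j) · Π_{k=i+1}^{t}(1 − α/k) · Π_{l=j+1}^{t}(1 − α/l) · ∫_Z ∫_Z ⟨f(z), f(z')⟩ P^{j−i}(z, dz') dρ(z) ≤ (24σ²/(1−α)) · (Dr/(1−r)) · (1/t)^α. -/

import Mathlib

open MeasureTheory ProbabilityTheory
open scoped ENNReal RealInnerProductSpace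

/-- The `m`-step transition kernel obtained by iterating `P`. -/
noncomputable def kernelIter {Z : Type*} [MeasurableSpace Z] (P : Kernel Z Z) : ℕ → Kernel Z Z
  | 0 => Kernel.id
  | m + 1 => (kernelIter P m).comp P

/-- The φ-mixing coefficient of the stationary Markov chain with kernel `P` and
invariant distribution `ρ`. -/
noncomputable def phiCoef {Z : Type*} [MeasurableSpace Z] (P : Kernel Z Z) (ρ : Measure Z)
    (m : ℕ) : ℝ :=
  essSup (fun z => ⨆ B : {B : Set Z // MeasurableSet B},
    |(kernelIter P m z B.1).toReal - (ρ B.1).toReal|) ρ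

instance kernelIter_markov {Z : Type*} [MeasurableSpace Z] (P : Kernel Z Z) [IsMarkovKernel P]
    (m : ℕ) : IsMarkovKernel (kernelIter P m) := by
  induction m with
  | zero => rw [kernelIter]; infer_instance
  | succ n ih => rw [kernelIter]; infer_instance

/-- Total variation bound for integrals of bounded measurable functions. -/
lemma tv_integral_bound {Z : Type*} [MeasurableSpace Z] (μ ν : Measure Z)
    [IsProbabilityMeasure μ] [IsProbabilityMeasure ν]
    (g : Z → ℝ) (hg : Measurable g) (c : ℝ) (hgc : ∀ z, |g z| ≤ c)
    (d : ℝ) (hd0 : 0 ≤ d)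
    (hd : ∀ B : Set Z, MeasurableSet B → |(μ B).toReal - (ν B).toReal| ≤ d) :
    ∫ z, g z ∂μ - ∫ z, g z ∂ν ≤ 2 * c * d := by
  have hZ : Nonempty Z := by
    by_contra h
    have h0 : μ Set.univ = 0 := by
      rw [Set.univ_eq_empty_iff.mpr (not_nonempty_iff.mp h)]; simp
    rw [measure_univ] at h0; exact one_ne_zero h0
  have hc : 0 ≤ c := le_trans (abs_nonneg _) (hgc (Classical.arbitrary Z))
  set h : Z → ℝ := fun z => g z + c with hh_def
  have hh_meas : Measurable h := hg.add_const c
  have hh_nn : ∀ z, 0 ≤ h z := fun z => by have := abs_le.mp (hgc z); simp [hh_def]; linarith [this.1]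
  have hh_le : ∀ z, h z ≤ 2 * c := fun z => by
    have := abs_le.mp (hgc z); simp [hh_def]; linarith [this.2]
  have hint : ∀ (π : Measure Z), IsProbabilityMeasure π → Integrable h π := by
    intro π hπ
    refine Integrable.mono' (integrable_const (2 * c)) hh_meas.aestronglyMeasurable ?_
    filter_upwards with z
    rw [Real.norm_eq_abs, abs_of_nonneg (hh_nn z)]; exact hh_le z
  have hintμ := hint μ inferInstance
  have hintν := hint ν inferInstance
  have hgint : ∀ (π : Measure Z), IsProbabilityMeasure π → Integrable g π := by
    intro π hπ
    refine Integrable.mono' (integrable_const c) hg.aestronglyMeasurable ?_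
    filter_upwards with z using (Real.norm_eq_abs (g z)) ▸ hgc z
  set F : ℝ → ℝ := fun t => (μ {a | t < h a}).toReal with hF_def
  set G : ℝ → ℝ := fun t => (ν {a | t < h a}).toReal with hG_def
  have hBmeas : ∀ t : ℝ, MeasurableSet {a | t < h a} := fun t =>
    hh_meas measurableSet_Ioi
  have hanti : ∀ (π : Measure Z), IsProbabilityMeasure π →
      Antitone (fun t : ℝ => (π {a | t < h a}).toReal) := by
    intro π hπ s t hst
    dsimp only
    refine ENNReal.toReal_mono (measure_ne_top π _) (measure_mono ?_)
    intro a ha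
    exact lt_of_le_of_lt hst ha
  have hFle1 : ∀ (π : Measure Z), IsProbabilityMeasure π → ∀ t : ℝ,
      (π {a | t < h a}).toReal ≤ 1 := by
    intro π hπ t
    have := prob_le_one (μ := π) (s := {a | t < h a})
    simpa using ENNReal.toReal_le_toReal (measure_ne_top π _) (by simp) |>.mpr this
  have hzero : ∀ (π : Measure Z), ∀ t : ℝ, 2 * c ≤ t → (π {a | t < h a}).toReal = 0 := by
    intro π t hct
    have : {a | t < h a} = ∅ := by
      ext a; simp only [Set.mem_setOf_eq, Set.mem_empty_iff_false, iff_false, not_lt]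
      exact (hh_le a).trans hct
    rw [this]; simp
  have LCμ : ∫ z, h z ∂μ = ∫ t in Set.Ioi (0:ℝ), F t :=
    hintμ.integral_eq_integral_meas_lt (Filter.Eventually.of_forall hh_nn)
  have LCν : ∫ z, h z ∂ν = ∫ t in Set.Ioi (0:ℝ), G t :=
    hintν.integral_eq_integral_meas_lt (Filter.Eventually.of_forall hh_nn)
  have hsub : Set.Ioc (0:ℝ) (2*c) ⊆ Set.Ioi 0 := Set.Ioc_subset_Ioi_self
  have hrestr : ∀ (π : Measure Z), (∫ t in Set.Ioi (0:ℝ), (π {a | t < h a}).toReal)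
      = ∫ t in Set.Ioc (0:ℝ) (2*c), (π {a | t < h a}).toReal := by
    intro π
    refine setIntegral_eq_of_subset_of_forall_diff_eq_zero measurableSet_Ioi hsub ?_
    rintro x ⟨hx1, hx2⟩
    simp only [Set.mem_Ioc, not_and, not_le] at hx2
    exact hzero π x (le_of_lt (hx2 hx1))
  have hIocfin : (volume (Set.Ioc (0:ℝ) (2*c))) < ⊤ := measure_Ioc_lt_top
  have hintF : ∀ (π : Measure Z), IsProbabilityMeasure π → IntegrableOn
      (fun t : ℝ => (π {a | t < h a}).toReal) (Set.Ioc (0:ℝ) (2*c)) volume := by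
    intro π hπ
    refine Integrable.mono' ((integrableOn_const_iff (C := (1:ℝ))).mpr (Or.inr hIocfin))
      ((hanti π hπ).measurable).aestronglyMeasurable ?_
    filter_upwards with t
    rw [Real.norm_eq_abs, abs_of_nonneg ENNReal.toReal_nonneg]
    exact hFle1 π hπ t
  have key : ∫ z, g z ∂μ - ∫ z, g z ∂ν = ∫ z, h z ∂μ - ∫ z, h z ∂ν := by
    rw [hh_def]
    rw [integral_add (hgint μ inferInstance) (integrable_const c),
      integral_add (hgint ν inferInstance) (integrable_const c)]
    simp
  rw [key, LCμ, LCν, hrestr μ, hrestr ν,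
    ← integral_sub (hintF μ inferInstance) (hintF ν inferInstance)]
  have hb := norm_setIntegral_le_of_norm_le_const (μ := volume) (C := d)
      (f := fun t => F t - G t) hIocfin ?_
  · calc ∫ t in Set.Ioc (0:ℝ) (2*c), (F t - G t)
        ≤ ‖∫ t in Set.Ioc (0:ℝ) (2*c), (F t - G t)‖ := le_abs_self _
      _ ≤ d * (volume (Set.Ioc (0:ℝ) (2*c))).toReal := hb
      _ = 2 * c * d := by
          rw [Real.volume_Ioc, ENNReal.toReal_ofReal (by linarith)]; ring
  · intro t _
    rw [Real.norm_eq_abs]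
    exact hd _ (hBmeas t)

/-- The mixing bound on the double integral (cross term). -/
lemma cross_integral_bound
    {Z : Type*} [MeasurableSpace Z]
    {W : Type*} [NormedAddCommGroup W] [InnerProductSpace ℝ W] [CompleteSpace W]
    (P : Kernel Z Z) [IsMarkovKernel P]
    (ρ : Measure Z) [IsProbabilityMeasure ρ]
    (f : Z → W) (hf_meas : StronglyMeasurable f)
    (hf_mean : ∫ z, f z ∂ρ = 0)
    (σ : ℝ) (hσ : 0 ≤ σ) (hf_bd : ∀ z, ‖f z‖ ≤ σ)
    (m : ℕ) (C : ℝ) (hC0 : 0 ≤ C) (hφ : phiCoef P ρ m ≤ C) :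
    |∫ z, ∫ z', ⟪f z, f z'⟫ ∂(kernelIter P m z) ∂ρ| ≤ 2 * σ ^ 2 * C := by
  set κ := kernelIter P m with hκ
  have hfint : ∀ (π : Measure Z), IsProbabilityMeasure π → Integrable f π := by
    intro π hπ
    refine Integrable.mono' (integrable_const σ) hf_meas.aestronglyMeasurable ?_
    filter_upwards with z using hf_bd z
  set dfun : Z → ℝ := fun z => ⨆ B : {B : Set Z // MeasurableSet B},
    |(κ z B.1).toReal - (ρ B.1).toReal| with hdfun
  have helt : ∀ z : Z, ∀ B : {B : Set Z // MeasurableSet B},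
      |(κ z B.1).toReal - (ρ B.1).toReal| ≤ 2 := by
    intro z B
    have h1 : (κ z B.1).toReal ≤ 1 := by
      haveI : IsProbabilityMeasure (κ z) := inferInstance
      simpa using ENNReal.toReal_mono (by simp) (prob_le_one (μ := κ z) (s := B.1))
    have h2 : (ρ B.1).toReal ≤ 1 := by
      simpa using ENNReal.toReal_mono (by simp) (prob_le_one (μ := ρ) (s := B.1))
    have h3 : 0 ≤ (κ z B.1).toReal := ENNReal.toReal_nonneg
    have h4 : 0 ≤ (ρ B.1).toReal := ENNReal.toReal_nonneg
    rw [abs_le]; constructor <;> linarith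
  have hbdd : ∀ z : Z, BddAbove (Set.range fun B : {B : Set Z // MeasurableSet B} =>
      |(κ z B.1).toReal - (ρ B.1).toReal|) := by
    intro z; exact ⟨2, by rintro x ⟨B, rfl⟩; exact helt z B⟩
  have hd_le : ∀ z : Z, ∀ B : Set Z, MeasurableSet B →
      |(κ z B).toReal - (ρ B).toReal| ≤ dfun z := by
    intro z B hB
    exact le_ciSup (hbdd z) ⟨B, hB⟩
  have hd_nn : ∀ z, 0 ≤ dfun z := by
    intro z
    exact le_trans (abs_nonneg _) (hd_le z ∅ MeasurableSet.empty)
  have hae : ∀ᵐ z ∂ρ, dfun z ≤ phiCoef P ρ m := by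
    have : phiCoef P ρ m = essSup dfun ρ := rfl
    rw [this]
    exact ae_le_essSup (Filter.isBoundedUnder_of ⟨2, fun z => ciSup_le fun B => helt z B⟩)
  have hptwise : ∀ᵐ z ∂ρ, ‖∫ z', ⟪f z, f z'⟫ ∂(κ z)‖ ≤ 2 * σ ^ 2 * C := by
    filter_upwards [hae] with z hz
    have hdC : dfun z ≤ C := hz.trans hφ
    haveI : IsProbabilityMeasure (κ z) := inferInstance
    set v := ∫ z', f z' ∂(κ z) with hv
    have hginn : ∫ z', ⟪f z, f z'⟫ ∂(κ z) = ⟪f z, v⟫ :=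
      integral_inner (hfint (κ z) inferInstance) (f z)
    have hgmeas : Measurable fun z' => ⟪v, f z'⟫ :=
      ((stronglyMeasurable_const (b := v)).inner hf_meas).measurable
    have hgbd : ∀ z', |⟪v, f z'⟫| ≤ ‖v‖ * σ := fun z' =>
      (abs_real_inner_le_norm v (f z')).trans
        (mul_le_mul_of_nonneg_left (hf_bd z') (norm_nonneg v))
    have hsq : ‖v‖ ^ 2 ≤ 2 * (‖v‖ * σ) * dfun z := by
      have h1 : ∫ z', ⟪v, f z'⟫ ∂(κ z) - ∫ z', ⟪v, f z'⟫ ∂ρ ≤ 2 * (‖v‖ * σ) * dfun z :=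
        tv_integral_bound (κ z) ρ _ hgmeas _ hgbd _ (hd_nn z) (hd_le z)
      rwa [integral_inner (hfint (κ z) inferInstance), integral_inner (hfint ρ inferInstance),
        hf_mean, inner_zero_right, sub_zero, ← hv, real_inner_self_eq_norm_sq] at h1
    have hvle : ‖v‖ ≤ 2 * σ * C := by
      rcases eq_or_lt_of_le (norm_nonneg v) with h | h
      · rw [← h]; positivity
      · nlinarith [mul_le_mul_of_nonneg_left hdC (by positivity : (0:ℝ) ≤ 2 * (‖v‖ * σ))]
    rw [hginn]
    calc ‖⟪f z, v⟫‖ ≤ ‖f z‖ * ‖v‖ := by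
          rw [Real.norm_eq_abs]; exact abs_real_inner_le_norm _ _
      _ ≤ σ * (2 * σ * C) := mul_le_mul (hf_bd z) hvle (norm_nonneg v) hσ
      _ = 2 * σ ^ 2 * C := by ring
  have := norm_integral_le_of_norm_le_const hptwise
  simpa using this

lemma geom_tail_sum {r : ℝ} (hr0 : 0 ≤ r) (hr1 : r < 1) (i t : ℕ) :
    ∑ j ∈ Finset.Ioc i t, r ^ (j - i) ≤ r / (1 - r) := by
  have h1 : Finset.Ioc i t = Finset.Ico (i + 1) (t + 1) := by ext x; simp
  rw [h1, Finset.sum_Ico_eq_sum_range]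
  have h2 : ∀ k ∈ Finset.range (t + 1 - (i + 1)), r ^ (i + 1 + k - i) = r ^ k * r := by
    intro k _
    rw [show i + 1 + k - i = k + 1 by omega, pow_succ]
  rw [Finset.sum_congr rfl h2, ← Finset.sum_mul]
  have h3 : ∑ k ∈ Finset.range (t + 1 - (i + 1)), r ^ k ≤ (1 - r)⁻¹ := by
    rw [← tsum_geometric_of_lt_one hr0 hr1]
    exact Summable.sum_le_tsum _ (fun k _ => pow_nonneg hr0 k) (summable_geometric_of_lt_one hr0 hr1)
  calc (∑ k ∈ Finset.range (t + 1 - (i + 1)), r ^ k) * r ≤ (1 - r)⁻¹ * r :=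
        mul_le_mul_of_nonneg_right h3 hr0
    _ = r / (1 - r) := by rw [div_eq_mul_inv]; ring

lemma prod_one_sub_div_le {α : ℝ} (hα0 : 0 < α) (hα1 : α ≤ 1) (i t : ℕ) (hit : i ≤ t) :
    ∏ k ∈ Finset.Ioc i t, (1 - α / (k : ℝ)) ≤ (((i : ℝ) + 1) / ((t : ℝ) + 1)) ^ α := by
  have hfac : ∀ k ∈ Finset.Ioc i t, 0 ≤ 1 - α / (k : ℝ) := by
    intro k hk
    have hk1 : 1 ≤ k := by simp at hk; omega
    have hkpos : (0:ℝ) < k := by exact_mod_cast hk1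
    have : α / (k : ℝ) ≤ 1 := by
      rw [div_le_one hkpos]; exact hα1.trans (by exact_mod_cast hk1)
    linarith
  have step1 : ∏ k ∈ Finset.Ioc i t, (1 - α / (k : ℝ)) ≤
      ∏ k ∈ Finset.Ioc i t, Real.exp (-(α / (k : ℝ))) := by
    refine Finset.prod_le_prod hfac ?_
    intro k hk
    have := Real.add_one_le_exp (-(α / (k : ℝ)))
    linarith
  have step2 : ∏ k ∈ Finset.Ioc i t, Real.exp (-(α / (k : ℝ))) =
      Real.exp (-α * ∑ k ∈ Finset.Ioc i t, 1 / (k : ℝ)) := by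
    rw [← Real.exp_sum, Finset.mul_sum]
    congr 1
    exact Finset.sum_congr rfl fun k _ => by ring
  have hlogsum : Real.log ((t : ℝ) + 1) - Real.log ((i : ℝ) + 1) ≤
      ∑ k ∈ Finset.Ioc i t, 1 / (k : ℝ) := by
    have htel : ∑ k ∈ Finset.Ioc i t, (Real.log ((k : ℝ) + 1) - Real.log (k : ℝ)) =
        Real.log ((t : ℝ) + 1) - Real.log ((i : ℝ) + 1) := by
      have h1 : Finset.Ioc i t = Finset.Ico (i + 1) (t + 1) := by ext x; simp
      rw [h1, Finset.sum_Ico_eq_sum_range]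
      have h2 : ∀ m ∈ Finset.range (t + 1 - (i + 1)),
          (Real.log (((i + 1 + m : ℕ) : ℝ) + 1) - Real.log ((i + 1 + m : ℕ) : ℝ)) =
          ((fun n : ℕ => Real.log ((i : ℝ) + 1 + n)) (m + 1) -
            (fun n : ℕ => Real.log ((i : ℝ) + 1 + n)) m) := by
        intro m _
        have e1 : (((i + 1 + m : ℕ) : ℝ) + 1) = (i : ℝ) + 1 + ((m + 1 : ℕ) : ℝ) := by
          push_cast; ring
        have e2 : ((i + 1 + m : ℕ) : ℝ) = (i : ℝ) + 1 + (m : ℕ) := by push_cast; ring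
        rw [e1, e2]
      rw [Finset.sum_congr rfl h2, Finset.sum_range_sub (fun n : ℕ => Real.log ((i : ℝ) + 1 + n))]
      have e3 : (i : ℝ) + 1 + ((t + 1 - (i + 1) : ℕ) : ℝ) = (t : ℝ) + 1 := by
        have h4 : (t + 1 - (i + 1) : ℕ) = t - i := by omega
        rw [h4]
        have h5 : ((t - i : ℕ) : ℝ) = (t : ℝ) - i := by rw [Nat.cast_sub hit]
        rw [h5]; ring
      simp only [Nat.cast_zero, add_zero, e3]
    rw [← htel]
    refine Finset.sum_le_sum ?_
    intro k hk
    have hk1 : 1 ≤ k := by simp at hk; omega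
    have hkpos : (0:ℝ) < k := by exact_mod_cast hk1
    have hl : Real.log (((k : ℝ) + 1) / k) ≤ ((k : ℝ) + 1) / k - 1 :=
      Real.log_le_sub_one_of_pos (by positivity)
    rw [Real.log_div (by positivity) hkpos.ne'] at hl
    have : ((k : ℝ) + 1) / k - 1 = 1 / k := by field_simp; ring
    linarith [this ▸ hl]
  have step3 : Real.exp (-α * ∑ k ∈ Finset.Ioc i t, 1 / (k : ℝ)) ≤
      Real.exp (-α * (Real.log ((t : ℝ) + 1) - Real.log ((i : ℝ) + 1))) := by
    apply Real.exp_le_exp.mpr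
    nlinarith [hlogsum]
  have step4 : Real.exp (-α * (Real.log ((t : ℝ) + 1) - Real.log ((i : ℝ) + 1))) =
      (((i : ℝ) + 1) / ((t : ℝ) + 1)) ^ α := by
    rw [Real.rpow_def_of_pos (by positivity), Real.log_div (by positivity) (by positivity)]
    ring_nf
  calc ∏ k ∈ Finset.Ioc i t, (1 - α / (k : ℝ)) ≤ _ := step1
    _ = _ := step2
    _ ≤ _ := step3
    _ = _ := step4

lemma ratio_rpow_le {α : ℝ} (hα0 : 0 < α) (hα2 : α ≤ 1/2) (i t : ℕ)
    (hi : 1 ≤ i) (hit : i ≤ t) :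
    (((i : ℝ) + 1) / ((t : ℝ) + 1)) ^ α ≤ 3/2 * Real.sqrt i * (1 / (t : ℝ)) ^ α := by
  have hi1 : (1:ℝ) ≤ i := by exact_mod_cast hi
  have ht1 : (1:ℝ) ≤ t := by exact_mod_cast hi.trans hit
  have hitR : (i:ℝ) ≤ t := by exact_mod_cast hit
  have h1 : ((i : ℝ) + 1) / ((t : ℝ) + 1) ≤ 2 * i * (1 / t) := by
    rw [div_le_iff₀ (by positivity)]
    have : 2 * (i:ℝ) * (1 / t) = 2 * i / t := by ring
    rw [this, div_mul_eq_mul_div, le_div_iff₀ (by positivity)]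
    nlinarith
  have h2 : (((i : ℝ) + 1) / ((t : ℝ) + 1)) ^ α ≤ (2 * (i:ℝ) * (1 / t)) ^ α :=
    Real.rpow_le_rpow (by positivity) h1 hα0.le
  have h3 : (2 * (i:ℝ) * (1 / t)) ^ α = (2:ℝ) ^ α * (i:ℝ) ^ α * ((1:ℝ) / t) ^ α := by
    rw [Real.mul_rpow (by positivity) (by positivity),
      Real.mul_rpow (by positivity) (by positivity)]
  have h4 : (2:ℝ) ^ α ≤ 3/2 := by
    calc (2:ℝ) ^ α ≤ (2:ℝ) ^ (1/2 : ℝ) := Real.rpow_le_rpow_of_exponent_le one_le_two hα2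
      _ = Real.sqrt 2 := (Real.sqrt_eq_rpow 2).symm
      _ ≤ Real.sqrt ((3/2)^2) := Real.sqrt_le_sqrt (by norm_num)
      _ = 3/2 := Real.sqrt_sq (by norm_num)
  have h5 : (i:ℝ) ^ α ≤ Real.sqrt i := by
    calc (i:ℝ) ^ α ≤ (i:ℝ) ^ (1/2 : ℝ) := Real.rpow_le_rpow_of_exponent_le hi1 hα2
      _ = Real.sqrt i := (Real.sqrt_eq_rpow _).symm
  calc (((i : ℝ) + 1) / ((t : ℝ) + 1)) ^ α ≤ (2:ℝ) ^ α * (i:ℝ) ^ α * ((1:ℝ) / t) ^ α :=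
        h3 ▸ h2
    _ ≤ 3/2 * Real.sqrt i * (1 / (t : ℝ)) ^ α := by
        have hnn : (0:ℝ) ≤ ((1:ℝ) / t) ^ α := by positivity
        have := mul_le_mul h4 h5 (by positivity) (by norm_num)
        exact mul_le_mul_of_nonneg_right this hnn

lemma sqrt_div_sq_sum_le (t : ℕ) (ht : 1 ≤ t) :
    ∑ i ∈ Finset.Icc 1 t, Real.sqrt i / (i : ℝ) ^ 2 ≤ 3 := by
  have hsplit : Finset.Icc 1 t = insert 1 (Finset.Icc 2 t) := by ext x; simp; omega
  rw [hsplit, Finset.sum_insert (by simp)]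
  have h1 : Real.sqrt ((1:ℕ):ℝ) / ((1:ℕ) : ℝ) ^ 2 = 1 := by norm_num
  rw [h1]
  have key : ∀ m : ℕ, Real.sqrt ((m:ℝ) + 2) / ((m:ℝ) + 2) ^ 2 ≤
      2 / Real.sqrt ((m:ℝ) + 1) - 2 / Real.sqrt ((m:ℝ) + 2) := by
    intro m
    set a := Real.sqrt ((m:ℝ) + 1) with hadef
    set b := Real.sqrt ((m:ℝ) + 2) with hbdef
    have ha : 0 < a := Real.sqrt_pos.mpr (by positivity)
    have hb : 0 < b := Real.sqrt_pos.mpr (by positivity)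
    have ha2 : a ^ 2 = (m:ℝ) + 1 := Real.sq_sqrt (by positivity)
    have hb2 : b ^ 2 = (m:ℝ) + 2 := Real.sq_sqrt (by positivity)
    have hab : a ≤ b := Real.sqrt_le_sqrt (by linarith)
    rw [← hb2, div_sub_div _ _ ha.ne' hb.ne', div_le_div_iff₀ (by positivity) (by positivity)]
    nlinarith [mul_pos ha hb, sq_nonneg (b - a),
      mul_nonneg (sub_nonneg.mpr hab) (pow_pos hb 3).le,
      mul_nonneg (sub_nonneg.mpr hab) (mul_pos (mul_pos ha hb) hb).le]
  have h2 : ∑ i ∈ Finset.Icc 2 t, Real.sqrt i / (i : ℝ) ^ 2 ≤ 2 := by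
    have hIco : Finset.Icc 2 t = Finset.Ico 2 (t + 1) := by ext x; simp
    rw [hIco, Finset.sum_Ico_eq_sum_range]
    have hbd : ∀ m ∈ Finset.range (t + 1 - 2),
        Real.sqrt ((2 + m : ℕ) : ℝ) / (((2 + m : ℕ) : ℝ)) ^ 2 ≤
        ((fun n : ℕ => 2 / Real.sqrt ((n:ℝ) + 1)) m -
          (fun n : ℕ => 2 / Real.sqrt ((n:ℝ) + 1)) (m + 1)) := by
      intro m _
      have e1 : ((2 + m : ℕ) : ℝ) = (m:ℝ) + 2 := by push_cast; ring
      have e2 : ((m + 1 : ℕ) : ℝ) + 1 = (m:ℝ) + 2 := by push_cast; ring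
      rw [e1]
      simp only [e2]
      exact key m
    calc ∑ m ∈ Finset.range (t + 1 - 2), Real.sqrt ((2 + m : ℕ) : ℝ) / (((2 + m : ℕ) : ℝ)) ^ 2
        ≤ ∑ m ∈ Finset.range (t + 1 - 2), ((fun n : ℕ => 2 / Real.sqrt ((n:ℝ) + 1)) m -
          (fun n : ℕ => 2 / Real.sqrt ((n:ℝ) + 1)) (m + 1)) := Finset.sum_le_sum hbd
      _ = (fun n : ℕ => 2 / Real.sqrt ((n:ℝ) + 1)) 0 -
          (fun n : ℕ => 2 / Real.sqrt ((n:ℝ) + 1)) (t + 1 - 2) :=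
          Finset.sum_range_sub' (fun n : ℕ => 2 / Real.sqrt ((n:ℝ) + 1)) _
      _ ≤ 2 := by
          simp only [Nat.cast_zero, zero_add, Real.sqrt_one]
          have : 0 ≤ 2 / Real.sqrt (((t + 1 - 2 : ℕ) : ℝ) + 1) := by positivity
          linarith
  linarith

theorem cross_term_bound_phi_mixing_theta_one
    {Z : Type*} [MeasurableSpace Z]
    {W : Type*} [NormedAddCommGroup W] [InnerProductSpace ℝ W] [CompleteSpace W]
    (P : Kernel Z Z) [IsMarkovKernel P]
    (ρ : Measure Z) [IsProbabilityMeasure ρ]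
    (hinv : ρ.bind (fun z => P z) = ρ)
    (f : Z → W) (hf_meas : StronglyMeasurable f) (hf_int : Integrable f ρ)
    (hf_mean : ∫ z, f z ∂ρ = 0)
    (σ : ℝ) (hσ : 0 ≤ σ) (hf_bd : ∀ z, ‖f z‖ ≤ σ)
    (α : ℝ) (hα : α ∈ Set.Ioo (0 : ℝ) (1/2))
    (D r : ℝ) (hD : 0 < D) (hr0 : 0 < r) (hr1 : r < 1)
    (hphi : ∀ m : ℕ, 1 ≤ m → phiCoef P ρ m ≤ D * r ^ m)
    (t : ℕ) (ht : 1 ≤ t) :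
    2 * ∑ i ∈ Finset.Icc 1 t, ∑ j ∈ Finset.Ioc i t,
        (1 / (i : ℝ)) * (1 / (j : ℝ)) *
          (∏ k ∈ Finset.Ioc i t, (1 - α / (k : ℝ))) *
          (∏ l ∈ Finset.Ioc j t, (1 - α / (l : ℝ))) *
          (∫ z, ∫ z', ⟪f z, f z'⟫ ∂(kernelIter P (j - i) z) ∂ρ) ≤
      24 * σ ^ 2 / (1 - α) * (D * r / (1 - r)) * (1 / (t : ℝ)) ^ α := by
  obtain ⟨hα0, hα2⟩ := hα
  have hα1 : α ≤ 1 := by linarith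
  have hfac : ∀ (a b : ℕ), ∀ k ∈ Finset.Ioc a b, 0 ≤ 1 - α / (k : ℝ) := by
    intro a b k hk
    have hk1 : 1 ≤ k := by simp at hk; omega
    have hkpos : (0:ℝ) < k := by exact_mod_cast hk1
    have : α / (k : ℝ) ≤ 1 := by
      rw [div_le_one hkpos]; exact hα1.trans (by exact_mod_cast hk1)
    linarith
  set K : ℝ := 2 * σ ^ 2 * D * (r / (1 - r)) * (3/2) * ((1 / (t : ℝ)) ^ α) with hK
  have hKnn : 0 ≤ K := by
    have h1r : (0:ℝ) < 1 - r := by linarith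
    have : (0:ℝ) ≤ (1 / (t : ℝ)) ^ α := by positivity
    have : (0:ℝ) ≤ r / (1 - r) := by positivity
    positivity
  have hper : ∀ i ∈ Finset.Icc 1 t,
      (∑ j ∈ Finset.Ioc i t,
        (1 / (i : ℝ)) * (1 / (j : ℝ)) *
          (∏ k ∈ Finset.Ioc i t, (1 - α / (k : ℝ))) *
          (∏ l ∈ Finset.Ioc j t, (1 - α / (l : ℝ))) *
          (∫ z, ∫ z', ⟪f z, f z'⟫ ∂(kernelIter P (j - i) z) ∂ρ)) ≤
      K * (Real.sqrt i / (i : ℝ) ^ 2) := by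
    intro i hi
    rw [Finset.mem_Icc] at hi
    obtain ⟨hi1, hit⟩ := hi
    have hiR : (1:ℝ) ≤ (i:ℝ) := by exact_mod_cast hi1
    have hipos : (0:ℝ) < (i:ℝ) := by linarith
    set Pii : ℝ := ∏ k ∈ Finset.Ioc i t, (1 - α / (k : ℝ)) with hPii
    have hPiinn : 0 ≤ Pii := Finset.prod_nonneg (hfac i t)
    have claim1 : ∀ j ∈ Finset.Ioc i t,
        (1 / (i : ℝ)) * (1 / (j : ℝ)) * Pii *
          (∏ l ∈ Finset.Ioc j t, (1 - α / (l : ℝ))) *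
          (∫ z, ∫ z', ⟪f z, f z'⟫ ∂(kernelIter P (j - i) z) ∂ρ) ≤
        ((1 / (i : ℝ)) * (1 / (i : ℝ)) * Pii * (2 * σ ^ 2 * D)) * r ^ (j - i) := by
      intro j hj
      rw [Finset.mem_Ioc] at hj
      obtain ⟨hij, hjt⟩ := hj
      have hjR : (i:ℝ) < (j:ℝ) := by exact_mod_cast hij
      have hjpos : (0:ℝ) < (j:ℝ) := lt_trans hipos hjR
      have hm1 : 1 ≤ j - i := by omega
      have hIbd : |∫ z, ∫ z', ⟪f z, f z'⟫ ∂(kernelIter P (j - i) z) ∂ρ| ≤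
          2 * σ ^ 2 * (D * r ^ (j - i)) :=
        cross_integral_bound P ρ f hf_meas hf_mean σ hσ hf_bd (j - i)
          (D * r ^ (j - i)) (by positivity) (hphi (j - i) hm1)
      set I : ℝ := ∫ z, ∫ z', ⟪f z, f z'⟫ ∂(kernelIter P (j - i) z) ∂ρ with hIdef
      set Pjj : ℝ := ∏ l ∈ Finset.Ioc j t, (1 - α / (l : ℝ)) with hPjj
      have hPjjnn : 0 ≤ Pjj := Finset.prod_nonneg (hfac j t)
      have hPjjle : Pjj ≤ 1 := by
        refine Finset.prod_le_one (hfac j t) ?_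
        intro k hk
        have hk1 : 1 ≤ k := by simp at hk; omega
        have hkpos : (0:ℝ) < k := by exact_mod_cast hk1
        have : 0 ≤ α / (k : ℝ) := by positivity
        linarith
      have hcnn : 0 ≤ (1 / (i : ℝ)) * (1 / (j : ℝ)) * Pii * Pjj := by
        have h1 : (0:ℝ) ≤ 1 / (i:ℝ) := by positivity
        have h2 : (0:ℝ) ≤ 1 / (j:ℝ) := by positivity
        exact mul_nonneg (mul_nonneg (mul_nonneg h1 h2) hPiinn) hPjjnn
      have step1 : (1 / (i : ℝ)) * (1 / (j : ℝ)) * Pii * Pjj * I ≤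
          (1 / (i : ℝ)) * (1 / (j : ℝ)) * Pii * Pjj * (2 * σ ^ 2 * (D * r ^ (j - i))) :=
        mul_le_mul_of_nonneg_left ((le_abs_self I).trans hIbd) hcnn
      have step2 : (1 / (i : ℝ)) * (1 / (j : ℝ)) * Pii * Pjj ≤
          (1 / (i : ℝ)) * (1 / (i : ℝ)) * Pii := by
        have h1j : 1 / (j:ℝ) ≤ 1 / (i:ℝ) := by
          apply one_div_le_one_div_of_le hipos hjR.le
        have h1 : (0:ℝ) ≤ 1 / (i:ℝ) := by positivity
        have h2 : (0:ℝ) ≤ 1 / (j:ℝ) := by positivity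
        calc (1 / (i : ℝ)) * (1 / (j : ℝ)) * Pii * Pjj
            ≤ (1 / (i : ℝ)) * (1 / (j : ℝ)) * Pii * 1 :=
              mul_le_mul_of_nonneg_left hPjjle (mul_nonneg (mul_nonneg h1 h2) hPiinn)
          _ = (1 / (i : ℝ)) * (1 / (j : ℝ)) * Pii := by ring
          _ ≤ (1 / (i : ℝ)) * (1 / (i : ℝ)) * Pii := by
              refine mul_le_mul_of_nonneg_right ?_ hPiinn
              exact mul_le_mul_of_nonneg_left h1j h1
      have step3 : (1 / (i : ℝ)) * (1 / (j : ℝ)) * Pii * Pjj * (2 * σ ^ 2 * (D * r ^ (j - i))) ≤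
          (1 / (i : ℝ)) * (1 / (i : ℝ)) * Pii * (2 * σ ^ 2 * (D * r ^ (j - i))) :=
        mul_le_mul_of_nonneg_right step2 (by positivity)
      calc (1 / (i : ℝ)) * (1 / (j : ℝ)) * Pii * Pjj * I ≤ _ := step1
        _ ≤ _ := step3
        _ = ((1 / (i : ℝ)) * (1 / (i : ℝ)) * Pii * (2 * σ ^ 2 * D)) * r ^ (j - i) := by ring
    have hsum1 : (∑ j ∈ Finset.Ioc i t,
        (1 / (i : ℝ)) * (1 / (j : ℝ)) * Pii *
          (∏ l ∈ Finset.Ioc j t, (1 - α / (l : ℝ))) *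
          (∫ z, ∫ z', ⟪f z, f z'⟫ ∂(kernelIter P (j - i) z) ∂ρ)) ≤
        ((1 / (i : ℝ)) * (1 / (i : ℝ)) * Pii * (2 * σ ^ 2 * D)) *
          ∑ j ∈ Finset.Ioc i t, r ^ (j - i) := by
      rw [Finset.mul_sum]
      exact Finset.sum_le_sum claim1
    have hcnn2 : 0 ≤ (1 / (i : ℝ)) * (1 / (i : ℝ)) * Pii * (2 * σ ^ 2 * D) := by
      have h1 : (0:ℝ) ≤ 1 / (i:ℝ) := by positivity
      exact mul_nonneg (mul_nonneg (mul_nonneg h1 h1) hPiinn) (by positivity)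
    have hsum2 : ((1 / (i : ℝ)) * (1 / (i : ℝ)) * Pii * (2 * σ ^ 2 * D)) *
          (∑ j ∈ Finset.Ioc i t, r ^ (j - i)) ≤
        ((1 / (i : ℝ)) * (1 / (i : ℝ)) * Pii * (2 * σ ^ 2 * D)) * (r / (1 - r)) :=
      mul_le_mul_of_nonneg_left (geom_tail_sum hr0.le hr1 i t) hcnn2
    have hPbd : Pii ≤ 3/2 * Real.sqrt i * (1 / (t : ℝ)) ^ α :=
      (prod_one_sub_div_le hα0 hα1 i t hit).trans
        (ratio_rpow_le hα0 hα2.le i t hi1 hit)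
    have hsum3 : ((1 / (i : ℝ)) * (1 / (i : ℝ)) * Pii * (2 * σ ^ 2 * D)) * (r / (1 - r)) ≤
        K * (Real.sqrt i / (i : ℝ) ^ 2) := by
      have h1r : (0:ℝ) < 1 - r := by linarith
      have e1 : ((1 / (i : ℝ)) * (1 / (i : ℝ)) * Pii * (2 * σ ^ 2 * D)) * (r / (1 - r)) =
          Pii * ((1 / (i : ℝ)) * (1 / (i : ℝ)) * (2 * σ ^ 2 * D) * (r / (1 - r))) := by ring
      have e2 : (3/2 * Real.sqrt i * (1 / (t : ℝ)) ^ α) *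
          ((1 / (i : ℝ)) * (1 / (i : ℝ)) * (2 * σ ^ 2 * D) * (r / (1 - r))) =
          K * (Real.sqrt i / (i : ℝ) ^ 2) := by
        rw [hK]; field_simp
      rw [e1, ← e2]
      exact mul_le_mul_of_nonneg_right hPbd (by positivity)
    calc (∑ j ∈ Finset.Ioc i t,
        (1 / (i : ℝ)) * (1 / (j : ℝ)) * Pii *
          (∏ l ∈ Finset.Ioc j t, (1 - α / (l : ℝ))) *
          (∫ z, ∫ z', ⟪f z, f z'⟫ ∂(kernelIter P (j - i) z) ∂ρ)) ≤ _ := hsum1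
      _ ≤ _ := hsum2
      _ ≤ K * (Real.sqrt i / (i : ℝ) ^ 2) := hsum3
  have hS : (∑ i ∈ Finset.Icc 1 t, ∑ j ∈ Finset.Ioc i t,
        (1 / (i : ℝ)) * (1 / (j : ℝ)) *
          (∏ k ∈ Finset.Ioc i t, (1 - α / (k : ℝ))) *
          (∏ l ∈ Finset.Ioc j t, (1 - α / (l : ℝ))) *
          (∫ z, ∫ z', ⟪f z, f z'⟫ ∂(kernelIter P (j - i) z) ∂ρ)) ≤ K * 3 := by
    calc (∑ i ∈ Finset.Icc 1 t, ∑ j ∈ Finset.Ioc i t,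
        (1 / (i : ℝ)) * (1 / (j : ℝ)) *
          (∏ k ∈ Finset.Ioc i t, (1 - α / (k : ℝ))) *
          (∏ l ∈ Finset.Ioc j t, (1 - α / (l : ℝ))) *
          (∫ z, ∫ z', ⟪f z, f z'⟫ ∂(kernelIter P (j - i) z) ∂ρ))
        ≤ ∑ i ∈ Finset.Icc 1 t, K * (Real.sqrt i / (i : ℝ) ^ 2) :=
          Finset.sum_le_sum hper
      _ = K * ∑ i ∈ Finset.Icc 1 t, Real.sqrt i / (i : ℝ) ^ 2 := by rw [Finset.mul_sum]
      _ ≤ K * 3 := mul_le_mul_of_nonneg_left (sqrt_div_sq_sum_le t ht) hKnn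
  have h1α : (0:ℝ) < 1 - α := by linarith
  have h1r : (0:ℝ) < 1 - r := by linarith
  have hfinal : 2 * (K * 3) ≤ 24 * σ ^ 2 / (1 - α) * (D * r / (1 - r)) * (1 / (t : ℝ)) ^ α := by
    have h18 : (18:ℝ) ≤ 24 / (1 - α) := by
      rw [le_div_iff₀ h1α]; nlinarith
    have hnn : (0:ℝ) ≤ σ ^ 2 * D * (r / (1 - r)) * ((1 / (t : ℝ)) ^ α) := by positivity
    have e1 : 2 * (K * 3) = 18 * (σ ^ 2 * D * (r / (1 - r)) * ((1 / (t : ℝ)) ^ α)) := by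
      rw [hK]; ring
    have e2 : 24 * σ ^ 2 / (1 - α) * (D * r / (1 - r)) * (1 / (t : ℝ)) ^ α =
        (24 / (1 - α)) * (σ ^ 2 * D * (r / (1 - r)) * ((1 / (t : ℝ)) ^ α)) := by
      field_simp
    rw [e1, e2]
    exact mul_le_mul_of_nonneg_right h18 hnn
  calc 2 * ∑ i ∈ Finset.Icc 1 t, ∑ j ∈ Finset.Ioc i t,
        (1 / (i : ℝ)) * (1 / (j : ℝ)) *
          (∏ k ∈ Finset.Ioc i t, (1 - α / (k : ℝ))) *
          (∏ l ∈ Finset.Ioc j t, (1 - α / (l : ℝ))) *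
          (∫ z, ∫ z', ⟪f z, f z'⟫ ∂(kernelIter P (j - i) z) ∂ρ)
      ≤ 2 * (K * 3) := by linarith [hS]
    _ ≤ 24 * σ ^ 2 / (1 - α) * (D * r / (1 - r)) * (1 / (t : ℝ)) ^ α := hfinal
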